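/- Let λ < 0, let a, b, g be real polynomials, and define F : ℝ³ → ℝ³ by F(x,y,z) = λ·(x,y,z) + g(z)(a(z)x + b(z)y)·(−b(z), a(z), 0) (note F(0) = 0). Then the origin is a global attractor of the autonomous system (ẋ,ẏ,ż) = F(x,y,z): every solution w : [0,∞) → ℝ³ of ẇ = F(w) satisfies w(t) → 0 as t → ∞. -/

import Mathlib

open Real Filter Polynomial

lemma myfst {α β: Type*} [NormedAddCommGroup α] [NormedSpace ℝ α] [NormedAddCommGroup β] [NormedSpace ℝ β] {f : ℝ → α × β} {d : α × β} {t : ℝ} (h : HasDerivAt f d t) : HasDerivAt (fun t => (f t).1) d.1 t := by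
  have := (ContinuousLinearMap.fst ℝ α β).hasFDerivAt.comp t h.hasFDerivAt
  simpa [Function.comp_def] using this.hasDerivAt

lemma mysnd {α β: Type*} [NormedAddCommGroup α] [NormedSpace ℝ α] [NormedAddCommGroup β] [NormedSpace ℝ β] {f : ℝ → α × β} {d : α × β} {t : ℝ} (h : HasDerivAt f d t) : HasDerivAt (fun t => (f t).2) d.2 t := by
  have := (ContinuousLinearMap.snd ℝ α β).hasFDerivAt.comp t h.hasFDerivAt
  simpa [Function.comp_def] using this.hasDerivAt


lemma decay_lemma {E : Type*} [NormedAddCommGroup E] [NormedSpace ℝ E]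
    (lam : ℝ) (hlam : lam < 0) (T₀ : ℝ)
    (v v' : ℝ → E)
    (hd : ∀ t ≥ T₀, HasDerivAt v (v' t) t)
    (hb : ∀ t ≥ T₀, ‖v' t - lam • v t‖ ≤ (-lam/2) * ‖v t‖) :
    Tendsto v atTop (nhds 0) := by
  set f : ℝ → E := fun t => exp (-lam * t) • v t with hf
  have hfd : ∀ t ≥ T₀, HasDerivAt f (exp (-lam * t) • (v' t - lam • v t)) t := by
    intro t ht
    have he : HasDerivAt (fun s : ℝ => exp (-lam * s)) (-lam * exp (-lam * t)) t := by
      have := (Real.hasDerivAt_exp (-lam * t)).comp t ((hasDerivAt_id t).const_mul (-lam))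
      have h2 : (Real.exp ∘ fun s => -lam * s) = fun s : ℝ => exp (-lam * s) := rfl
      rw [h2] at this
      exact this.congr_deriv (by ring)
    have := he.smul (hd t ht)
    exact this.congr_deriv (by rw [smul_sub, smul_smul]; module)
  -- Gronwall bound on [T₀, T]
  have key : ∀ t ≥ T₀, ‖f t‖ ≤ ‖f T₀‖ * exp ((-lam/2) * (t - T₀)) := by
    intro T hT
    have hcont : ContinuousOn f (Set.Icc T₀ T) := by
      intro s hs
      exact ((hfd s hs.1).continuousAt).continuousWithinAt
    have := norm_le_gronwallBound_of_norm_deriv_right_le (f := f)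
      (f' := fun t => exp (-lam * t) • (v' t - lam • v t)) (δ := ‖f T₀‖) (K := -lam/2) (ε := 0)
      hcont (fun s hs => ((hfd s hs.1).hasDerivWithinAt)) le_rfl
      (fun s hs => by
        rw [norm_smul, Real.norm_eq_abs, abs_of_pos (exp_pos _)]
        have := hb s hs.1
        calc exp (-lam*s) * ‖v' s - lam • v s‖ ≤ exp (-lam*s) * ((-lam/2) * ‖v s‖) := by
              exact mul_le_mul_of_nonneg_left this (exp_pos _).le
          _ = (-lam/2) * ‖f s‖ + 0 := by
              rw [hf]; rw [norm_smul, Real.norm_eq_abs, abs_of_pos (exp_pos _)]; ring)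
    have := this T ⟨hT, le_rfl⟩
    rwa [gronwallBound_ε0] at this
  -- squeeze
  have hvb : ∀ t ≥ T₀, ‖v t‖ ≤ (‖f T₀‖ * exp ((-lam/2) * (-T₀))) * exp ((lam/2) * t) := by
    intro t ht
    have h1 := key t ht
    have h2 : ‖f t‖ = exp (-lam * t) * ‖v t‖ := by
      rw [hf, norm_smul, Real.norm_eq_abs, abs_of_pos (exp_pos _)]
    rw [h2] at h1
    have h3 : ‖v t‖ ≤ ‖f T₀‖ * exp ((-lam/2) * (t - T₀)) * exp (lam * t) := by
      have := mul_le_mul_of_nonneg_right h1 (exp_pos (lam * t)).le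
      rwa [mul_comm (exp (-lam*t)) ‖v t‖, mul_assoc, ← Real.exp_add, neg_mul,
        neg_add_cancel, Real.exp_zero, mul_one] at this
    calc ‖v t‖ ≤ ‖f T₀‖ * exp ((-lam/2) * (t - T₀)) * exp (lam * t) := h3
      _ = (‖f T₀‖ * exp ((-lam/2) * (-T₀))) * exp ((lam/2) * t) := by
          rw [mul_assoc, mul_assoc, ← Real.exp_add, ← Real.exp_add]; ring_nf
  have hg : Tendsto (fun t : ℝ => (‖f T₀‖ * exp ((-lam/2) * (-T₀))) * exp ((lam/2) * t)) atTop (nhds 0) := by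
    rw [show (0:ℝ) = (‖f T₀‖ * exp ((-lam/2) * (-T₀))) * 0 by ring]
    apply Tendsto.const_mul
    apply Real.tendsto_exp_atBot.comp
    exact Tendsto.const_mul_atTop_of_neg (by linarith) tendsto_id
  apply squeeze_zero_norm' _ hg
  filter_upwards [eventually_ge_atTop T₀] with t ht using hvb t ht

lemma hasDerivAt_exp_mul (c t : ℝ) : HasDerivAt (fun s : ℝ => exp (c * s)) (c * exp (c * t)) t := by
  have := (Real.hasDerivAt_exp (c * t)).comp t ((hasDerivAt_id t).const_mul c)
  have h2 : (Real.exp ∘ fun s => c * s) = fun s : ℝ => exp (c * s) := rfl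
  rw [h2] at this
  exact this.congr_deriv (by ring)

lemma z_formula (lam : ℝ) (z : ℝ → ℝ) (hz : ∀ t ≥ (0:ℝ), HasDerivAt z (lam * z t) t) :
    ∀ t ≥ (0:ℝ), z t = z 0 * exp (lam * t) := by
  intro T hT
  have hconst : ∀ s ∈ Set.Icc (0:ℝ) T, exp (-lam * s) * z s = exp (-lam * 0) * z 0 := by
    apply constant_of_has_deriv_right_zero
    · intro s hs
      exact (((hasDerivAt_exp_mul (-lam) s).mul (hz s hs.1)).continuousAt).continuousWithinAt
    · intro s hs
      have h := ((hasDerivAt_exp_mul (-lam) s).mul (hz s hs.1)).hasDerivWithinAt (s := Set.Ici s)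
      exact h.congr_deriv (by ring)
  have h := hconst T ⟨hT, le_rfl⟩
  have h2 := congrArg (fun r => exp (lam * T) * r) h
  simp only [← mul_assoc, ← Real.exp_add] at h2
  simp only [mul_zero, add_zero] at h2
  rw [show lam * T + -lam * T = 0 by ring] at h2
  simpa [Real.exp_zero, mul_comm] using h2

/-- The origin is a global attractor of the autonomous system
`(ẋ,ẏ,ż) = F(x,y,z)` where `F = λI + H`, `λ < 0`, and
`H(x,y,z) = g(z)(a(z)x + b(z)y)·(−b(z), a(z), 0)`: every solution converges
to the origin as `t → ∞`. -/
theorem origin_global_attractor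
    (lam : ℝ) (hlam : lam < 0)
    (a b g : Polynomial ℝ)
    (F : ℝ × ℝ × ℝ → ℝ × ℝ × ℝ)
    (hF : ∀ p : ℝ × ℝ × ℝ, F p = lam • p +
      (g.eval p.2.2 * (a.eval p.2.2 * p.1 + b.eval p.2.2 * p.2.1)) •
        (-(b.eval p.2.2), a.eval p.2.2, (0:ℝ))) :
    F 0 = 0 ∧
    ∀ w : ℝ → ℝ × ℝ × ℝ, (∀ t ≥ (0:ℝ), HasDerivAt w (F (w t)) t) →
      Tendsto w atTop (nhds 0) := by
  constructor
  · rw [hF 0]; simp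
  intro w hw
  -- component notation
  set xc : ℝ → ℝ := fun t => (w t).1 with hxc
  set yc : ℝ → ℝ := fun t => (w t).2.1 with hyc
  set zc : ℝ → ℝ := fun t => (w t).2.2 with hzc
  set c : ℝ → ℝ := fun t => g.eval (zc t) * (a.eval (zc t) * xc t + b.eval (zc t) * yc t) with hc
  -- component derivatives
  have hx : ∀ t ≥ (0:ℝ), HasDerivAt xc (lam * xc t + c t * (-(b.eval (zc t)))) t := by
    intro t ht
    have h := myfst (hw t ht)
    rw [hF (w t)] at h
    simpa [Prod.smul_def, smul_eq_mul] using h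
  have hy : ∀ t ≥ (0:ℝ), HasDerivAt yc (lam * yc t + c t * (a.eval (zc t))) t := by
    intro t ht
    have h := myfst (mysnd (hw t ht))
    rw [hF (w t)] at h
    simpa [Prod.smul_def, smul_eq_mul] using h
  have hz : ∀ t ≥ (0:ℝ), HasDerivAt zc (lam * zc t) t := by
    intro t ht
    have h := mysnd (mysnd (hw t ht))
    rw [hF (w t)] at h
    simpa [Prod.smul_def, smul_eq_mul] using h
  -- z formula and bound
  have zf : ∀ t ≥ (0:ℝ), zc t = zc 0 * exp (lam * t) := z_formula lam zc hz
  have zb : ∀ t ≥ (0:ℝ), |zc t| ≤ |zc 0| := by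
    intro t ht
    rw [zf t ht, abs_mul, abs_of_pos (exp_pos _)]
    nlinarith [exp_le_one_iff.2 (by nlinarith : lam * t ≤ 0), abs_nonneg (zc 0), exp_pos (lam*t)]
  have zmem : ∀ t ≥ (0:ℝ), zc t ∈ Set.Icc (-|zc 0|) (|zc 0|) := fun t ht => abs_le.1 (zb t ht)
  -- constants from compactness
  obtain ⟨C₁, hC₁⟩ : ∃ C₁, ∀ s ∈ Set.Icc (-|zc 0|) (|zc 0|),
      ‖g.eval s • ((-(b.eval s) : ℝ), (a.eval s : ℝ), (0:ℝ))‖ ≤ C₁ := by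
    apply isCompact_Icc.exists_bound_of_continuousOn
    fun_prop
  obtain ⟨C₂, hC₂⟩ : ∃ C₂, ∀ s ∈ Set.Icc (-|zc 0|) (|zc 0|),
      ‖((a.derivative.eval s : ℝ), (b.derivative.eval s : ℝ))‖ ≤ C₂ := by
    apply isCompact_Icc.exists_bound_of_continuousOn
    fun_prop
  have hmem0 : (|zc 0| : ℝ) ∈ Set.Icc (-|zc 0|) (|zc 0|) :=
    ⟨by linarith [abs_nonneg (zc 0)], le_rfl⟩
  have hC₁0 : 0 ≤ C₁ := le_trans (norm_nonneg _) (hC₁ _ hmem0)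
  have hC₂0 : 0 ≤ C₂ := le_trans (norm_nonneg _) (hC₂ _ hmem0)
  -- weight K
  set K : ℝ := (4 * C₁ + 1) / (-lam) with hK
  have hKpos : 0 < K := div_pos (by linarith) (by linarith)
  -- u and its derivative
  set u : ℝ → ℝ := fun t => a.eval (zc t) * xc t + b.eval (zc t) * yc t with hu
  set D : ℝ → ℝ := fun t => a.derivative.eval (zc t) * xc t + b.derivative.eval (zc t) * yc t
    with hD
  have hud : ∀ t ≥ (0:ℝ), HasDerivAt u (lam * u t + lam * zc t * D t) t := by
    intro t ht
    have ha' : HasDerivAt (fun s => a.eval (zc s)) (a.derivative.eval (zc t) * (lam * zc t)) t :=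
      (a.hasDerivAt (zc t)).comp t (hz t ht)
    have hb' : HasDerivAt (fun s => b.eval (zc s)) (b.derivative.eval (zc t) * (lam * zc t)) t :=
      (b.hasDerivAt (zc t)).comp t (hz t ht)
    have h := (ha'.mul (hx t ht)).add (hb'.mul (hy t ht))
    refine h.congr_deriv ?_
    simp only [hu, hD, hc]
    ring
  -- the combined function v
  set v : ℝ → (ℝ × ℝ × ℝ) × ℝ := fun t => (w t, K * u t) with hv
  have hvd : ∀ t ≥ (0:ℝ),
      HasDerivAt v (F (w t), K * (lam * u t + lam * zc t * D t)) t := by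
    intro t ht
    exact (hw t ht).prodMk ((hud t ht).const_mul K)
  -- choice of T₀
  set M : ℝ := K * |lam| * |zc 0| * (2 * C₂) with hM
  have hM0 : 0 ≤ M := by positivity
  have htend : Tendsto (fun T : ℝ => M * exp (lam * T)) atTop (nhds 0) := by
    rw [show (0:ℝ) = M * 0 by ring]
    apply Tendsto.const_mul
    apply Real.tendsto_exp_atBot.comp
    exact Tendsto.const_mul_atTop_of_neg hlam tendsto_id
  obtain ⟨T₁, hT₁⟩ : ∃ T₁ : ℝ, ∀ t ≥ T₁, M * exp (lam * t) ≤ -lam / 2 :=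
    eventually_atTop.1 (htend.eventually_le_const (by linarith : (0:ℝ) < -lam/2))
  set T₀ : ℝ := max T₁ 0 with hT₀
  have hT₀0 : (0:ℝ) ≤ T₀ := le_max_right _ _
  have hlamK : (-lam) * K = 4 * C₁ + 1 := by
    rw [hK]; field_simp
    exact div_self (ne_of_lt hlam)
  -- apply the decay lemma to v
  have hvt : Tendsto v atTop (nhds 0) := by
    apply decay_lemma lam hlam T₀ v
      (fun t => (F (w t), K * (lam * u t + lam * zc t * D t)))
      (fun t ht => hvd t (le_trans hT₀0 ht))
    intro t ht
    have ht0 : (0:ℝ) ≤ t := le_trans hT₀0 ht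
    have hsub : (F (w t), K * (lam * u t + lam * zc t * D t)) - lam • v t =
        (u t • (g.eval (zc t) • ((-(b.eval (zc t)) : ℝ), a.eval (zc t), (0:ℝ))),
          K * (lam * zc t * D t)) := by
      have h1 : (F (w t), K * (lam * u t + lam * zc t * D t)) - lam • v t =
          (F (w t) - lam • w t, K * (lam * u t + lam * zc t * D t) - lam * (K * u t)) := rfl
      have hct : c t = u t * g.eval (zc t) := by simp only [hc, hu]; ring
      rw [h1, hF (w t)]
      refine Prod.ext ?_ (by ring)
      show lam • w t + c t • (-(b.eval ((w t).2.2)), a.eval ((w t).2.2), (0:ℝ)) - lam • w t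
          = u t • (g.eval (zc t) • (-(b.eval (zc t)), a.eval (zc t), (0:ℝ)))
      rw [add_sub_cancel_left, smul_smul, hct]
    rw [hsub, Prod.norm_def]
    apply max_le
    · -- first component
      rw [norm_smul, Real.norm_eq_abs]
      have hΦ := hC₁ (zc t) (zmem t ht0)
      have hKu : K * |u t| ≤ ‖v t‖ := by
        calc K * |u t| = |K * u t| := by rw [abs_mul, abs_of_pos hKpos]
          _ = ‖(v t).2‖ := (Real.norm_eq_abs _).symm
          _ ≤ ‖v t‖ := norm_snd_le _
      nlinarith [mul_le_mul_of_nonneg_left hΦ (abs_nonneg (u t)),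
        mul_le_mul_of_nonneg_left hKu (by linarith : (0:ℝ) ≤ -lam/2),
        abs_nonneg (u t), hC₁0, norm_nonneg (v t)]
    · -- second component
      rw [Real.norm_eq_abs]
      have hz' : |zc t| = |zc 0| * exp (lam * t) := by
        rw [zf t ht0, abs_mul, abs_of_pos (exp_pos _)]
      have hxb : |xc t| ≤ ‖v t‖ :=
        le_trans (norm_fst_le (w t)) (norm_fst_le (v t))
      have hyb : |yc t| ≤ ‖v t‖ :=
        le_trans (le_trans (norm_fst_le ((w t).2)) (norm_snd_le (w t))) (norm_fst_le (v t))
      have hab : |a.derivative.eval (zc t)| ≤ C₂ := by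
        have h := hC₂ (zc t) (zmem t ht0)
        rw [Prod.norm_def, Real.norm_eq_abs, Real.norm_eq_abs] at h
        exact le_trans (le_max_left _ _) h
      have hbb : |b.derivative.eval (zc t)| ≤ C₂ := by
        have h := hC₂ (zc t) (zmem t ht0)
        rw [Prod.norm_def, Real.norm_eq_abs, Real.norm_eq_abs] at h
        exact le_trans (le_max_right _ _) h
      have hDb : |D t| ≤ 2 * C₂ * ‖v t‖ := by
        calc |D t| ≤ |a.derivative.eval (zc t) * xc t| + |b.derivative.eval (zc t) * yc t| :=
              abs_add_le _ _
          _ = |a.derivative.eval (zc t)| * |xc t| + |b.derivative.eval (zc t)| * |yc t| := by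
              rw [abs_mul, abs_mul]
          _ ≤ C₂ * ‖v t‖ + C₂ * ‖v t‖ :=
              add_le_add (mul_le_mul hab hxb (abs_nonneg _) hC₂0)
                (mul_le_mul hbb hyb (abs_nonneg _) hC₂0)
          _ = 2 * C₂ * ‖v t‖ := by ring
      have hT := hT₁ t (le_trans (le_max_left T₁ 0) ht)
      calc |K * (lam * zc t * D t)| = K * |lam| * |zc t| * |D t| := by
            rw [abs_mul, abs_mul, abs_mul, abs_of_pos hKpos]; ring
        _ ≤ K * |lam| * (|zc 0| * exp (lam * t)) * (2 * C₂ * ‖v t‖) := by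
            rw [hz']
            exact mul_le_mul_of_nonneg_left hDb (by positivity)
        _ = (M * exp (lam * t)) * ‖v t‖ := by rw [hM]; ring
        _ ≤ (-lam / 2) * ‖v t‖ := mul_le_mul_of_nonneg_right hT (norm_nonneg _)
  -- squeeze
  exact squeeze_zero_norm (a := fun t => ‖v t‖) (fun t => norm_fst_le (v t))
    (by simpa using hvt.norm)
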